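/- Every piecewise testable language is recognizable by a C-RASP program without positional relations. In particular, for any word a₁a₂…a_n ∈ Σⁿ, the language Σ*a₁Σ*a₂Σ*…Σ*a_nΣ* (words containing a₁,…,a_n as a not-necessarily-contiguous subsequence in order) is C-RASP-recognizable, and the class of C-RASP-recognizable languages is closed under Boolean operations. -/

import Mathlib

mutual
/-- Syntax of C-RASP programs without positional relations: Boolean-valued
operations. A program (a sequence of operations, each possibly referring to
earlier ones) is represented by the expression tree of its final
Boolean-valued operation. -/
inductive BExpr (α : Type) : Type
  | tok : α → BExpr α                      -- initial operation `Q_σ(i)`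
  | not : BExpr α → BExpr α                -- Boolean negation
  | and : BExpr α → BExpr α → BExpr α      -- Boolean conjunction
  | top : BExpr α                          -- constant ⊤
  | le  : CExpr α → CExpr α → BExpr α      -- comparison `C₁(i) ≤ C₂(i)`
/-- Count-valued C-RASP operations. -/
inductive CExpr (α : Type) : Type
  | count : BExpr α → CExpr α              -- `#{j ≤ i : P(j)}`
  | cond  : BExpr α → CExpr α → CExpr α → CExpr α  -- conditional
  | add : CExpr α → CExpr α → CExpr α      -- addition
  | sub : CExpr α → CExpr α → CExpr α      -- subtraction
  | one : CExpr α                          -- constant 1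
end

mutual
/-- Evaluation of a Boolean-valued C-RASP operation on word `w` at
(0-based) position `i`. -/
def BExpr.eval {α : Type} [DecidableEq α] (w : List α) : BExpr α → ℕ → Bool
  | .tok σ, i => decide (w[i]? = some σ)
  | .not b, i => ! b.eval w i
  | .and b₁ b₂, i => b₁.eval w i && b₂.eval w i
  | .top, _ => true
  | .le c₁ c₂, i => decide (c₁.eval w i ≤ c₂.eval w i)
/-- Evaluation of a count-valued C-RASP operation on word `w` at position `i`. -/
def CExpr.eval {α : Type} [DecidableEq α] (w : List α) : CExpr α → ℕ → ℤ
  | .count b, i => ((List.range (i + 1)).countP (fun j => b.eval w j) : ℤ)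
  | .cond b c₁ c₂, i => if b.eval w i then c₁.eval w i else c₂.eval w i
  | .add c₁ c₂, i => c₁.eval w i + c₂.eval w i
  | .sub c₁ c₂, i => c₁.eval w i - c₂.eval w i
  | .one, _ => 1
end

/-- A C-RASP program accepts a word iff its final Boolean-valued operation is
true at the last position of the word. -/
def BExpr.accepts {α : Type} [DecidableEq α] (P : BExpr α) (w : List α) : Prop :=
  P.eval w (w.length - 1) = true

/-- Piecewise testable languages: the Boolean closure of the scattered
subsequence languages `Σ* a₁ Σ* a₂ Σ* … Σ* aₙ Σ*`. -/
inductive PiecewiseTestable {α : Type} : (List α → Prop) → Prop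
  | basic (pat : List α) : PiecewiseTestable (fun w => pat.Sublist w)
  | compl {L : List α → Prop} :
      PiecewiseTestable L → PiecewiseTestable (fun w => ¬ L w)
  | inter {L₁ L₂ : List α → Prop} :
      PiecewiseTestable L₁ → PiecewiseTestable L₂ →
        PiecewiseTestable (fun w => L₁ w ∧ L₂ w)

/-- Expression for the reversed pattern `a :: rest`, i.e. pattern `rest.reverse ++ [a]`. -/
def subseqExpr {α : Type} : α → List α → BExpr α
  | a, [] => .le .one (.count (.tok a))
  | a, b :: rest => .le .one (.count (.and (.tok a)
      (.le (.add .one .one) (.count (subseqExpr b rest)))))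

lemma take_mono_sublist {α : Type} (w : List α) {m n : ℕ} (h : m ≤ n) :
    (w.take m).Sublist (w.take n) := by
  have : (w.take n).take m = w.take m := by
    rw [List.take_take, min_eq_left h]
  rw [← this]
  exact List.take_sublist _ _

lemma singleton_case {α : Type} [DecidableEq α] (w : List α) (a : α) (i : ℕ) :
    (∃ j < i + 1, w[j]? = some a) ↔ [a].Sublist (w.take (i + 1)) := by
  rw [List.singleton_sublist]
  constructor
  · rintro ⟨j, hj, hja⟩
    rw [List.getElem?_eq_some_iff] at hja
    obtain ⟨hlen, hval⟩ := hja
    have : (w.take (i+1))[j]'(by simp [hlen, hj]) = a := by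
      simpa [List.getElem_take] using hval
    exact this ▸ List.getElem_mem _
  · intro ha
    obtain ⟨j, hj, hval⟩ := List.getElem_of_mem ha
    have hj' : j < i + 1 := lt_of_lt_of_le hj (by simp [List.length_take])
    refine ⟨j, hj', ?_⟩
    have hjw : j < w.length := lt_of_lt_of_le hj (by simp [List.length_take])
    rw [List.getElem?_eq_some_iff]
    exact ⟨hjw, by rw [← hval]; simp [List.getElem_take]⟩

lemma exists_shift {α : Type} [DecidableEq α] (w : List α) (s : List α) (a : α) (i : ℕ) :
    (∃ j < i + 1, w[j]? = some a ∧ s.Sublist (w.take j)) ↔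
      (s ++ [a]).Sublist (w.take (i + 1)) := by
  constructor
  · rintro ⟨j, hj, hja, hs⟩
    have hjw : j < w.length := (List.getElem?_eq_some_iff.1 hja).1
    have hval : w[j] = a := (List.getElem?_eq_some_iff.1 hja).2
    have htake : w.take (j+1) = w.take j ++ [a] := by
      rw [List.take_succ]
      simp [List.getElem?_eq_getElem hjw, hval]
    have h1 : (s ++ [a]).Sublist (w.take (j+1)) := by
      rw [htake]; exact hs.append (List.Sublist.refl _)
    exact h1.trans (take_mono_sublist w hj)
  · intro h
    rw [List.append_sublist_iff] at h
    obtain ⟨r₁, r₂, hsplit, hs1, hs2⟩ := h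
    rw [List.singleton_sublist] at hs2
    obtain ⟨u, v, huv⟩ := List.append_of_mem hs2
    set j := (r₁ ++ u).length with hjdef
    have hw : w.take (i+1) = (r₁ ++ u) ++ a :: v := by
      rw [hsplit, huv, List.append_assoc]
    have hjlt : j < (w.take (i+1)).length := by
      rw [hw]; simp [hjdef]
    have hjlen : j < i + 1 := lt_of_lt_of_le hjlt (by simp [List.length_take])
    have hjw : j < w.length := lt_of_lt_of_le hjlt (by simp [List.length_take])
    refine ⟨j, hjlen, ?_, ?_⟩
    · rw [List.getElem?_eq_some_iff]
      refine ⟨hjw, ?_⟩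
      have : (w.take (i+1))[j]'hjlt = a := by
        rw [List.getElem_of_eq hw]
        rw [List.getElem_append_right (le_of_eq hjdef.symm)]
        simp [hjdef]
      rw [← this]; simp [List.getElem_take]
    · have htj : w.take j = r₁ ++ u := by
        have : (w.take (i+1)).take j = r₁ ++ u := by
          rw [hw, hjdef, List.take_left]
        rwa [List.take_take, min_eq_left (le_of_lt hjlen)] at this
      rw [htj]
      exact hs1.trans (List.sublist_append_left _ _)

lemma two_le_count {α : Type} [DecidableEq α] (w : List α) (s : List α) (hs : s ≠ [])
    (B : ℕ → Bool) (hB : ∀ j, B j = true ↔ s.Sublist (w.take (j+1))) (j : ℕ) :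
    2 ≤ (List.range (j+1)).countP B ↔ s.Sublist (w.take j) := by
  rw [List.range_succ, List.countP_append]
  constructor
  · intro h
    have h1 : 1 ≤ (List.range j).countP B := by
      have : List.countP B [j] ≤ 1 := by
        simp [List.countP_cons]; split <;> simp
      omega
    obtain ⟨j', hj', hBj'⟩ := List.countP_pos_iff.1 (by omega : 0 < (List.range j).countP B)
    rw [List.mem_range] at hj'
    exact ((hB j').1 hBj').trans (take_mono_sublist w hj')
  · intro h
    have hj1 : 1 ≤ j := by
      rcases Nat.eq_zero_or_pos j with h0 | h1
      · exfalso; rw [h0] at h; simp at h; exact hs h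
      · exact h1
    have hBjm : B (j-1) = true := by
      rw [hB]
      have : j - 1 + 1 = j := by omega
      rwa [this]
    have hBj : B j = true := by
      rw [hB]; exact h.trans (take_mono_sublist w (Nat.le_succ j))
    have h1 : 1 ≤ (List.range j).countP B :=
      List.countP_pos_iff.2 ⟨j-1, List.mem_range.2 (by omega), hBjm⟩
    have h2 : List.countP B [j] = 1 := by simp [List.countP_cons, hBj]
    omega

lemma int_one_le (n : ℕ) : (1:ℤ) ≤ (n:ℤ) ↔ 0 < n := by exact_mod_cast Iff.rfl

lemma subseq_eval {α : Type} [DecidableEq α] (w : List α) :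
    ∀ (rest : List α) (a : α) (i : ℕ),
      (subseqExpr a rest).eval w i = true ↔ (rest.reverse ++ [a]).Sublist (w.take (i+1)) := by
  intro rest
  induction rest with
  | nil =>
    intro a i
    simp only [subseqExpr, BExpr.eval, decide_eq_true_eq, List.reverse_nil,
      List.nil_append]
    simp only [CExpr.eval]
    rw [int_one_le, List.countP_pos_iff]
    rw [← singleton_case w a i]
    constructor
    · rintro ⟨j, hj, hBj⟩
      rw [List.mem_range] at hj
      exact ⟨j, hj, by simpa [BExpr.eval] using hBj⟩
    · rintro ⟨j, hj, hja⟩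
      exact ⟨j, List.mem_range.2 hj, by simp [BExpr.eval, hja]⟩
  | cons b rest ih =>
    intro a i
    have hs : ((b :: rest).reverse : List α) ≠ [] := by simp
    simp only [subseqExpr, BExpr.eval, decide_eq_true_eq]
    simp only [CExpr.eval]
    rw [int_one_le, List.countP_pos_iff]
    rw [show ((b :: rest).reverse ++ [a] : List α) = (rest.reverse ++ [b]) ++ [a] by simp]
    rw [← exists_shift w (rest.reverse ++ [b]) a i]
    have hB : ∀ j, (subseqExpr b rest).eval w j = true ↔
        (rest.reverse ++ [b]).Sublist (w.take (j+1)) := fun j => ih b j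
    have hne : (rest.reverse ++ [b] : List α) ≠ [] := by simp
    constructor
    · rintro ⟨j, hj, hP⟩
      rw [List.mem_range] at hj
      simp only [BExpr.eval, Bool.and_eq_true, decide_eq_true_eq] at hP
      simp only [CExpr.eval] at hP
      obtain ⟨hja, hcnt⟩ := hP
      have : 2 ≤ (List.range (j+1)).countP (fun j' => (subseqExpr b rest).eval w j') := by
        exact_mod_cast hcnt
      exact ⟨j, hj, by simpa using hja,
        (two_le_count w _ hne _ hB j).1 this⟩
    · rintro ⟨j, hj, hja, hsub⟩
      refine ⟨j, List.mem_range.2 hj, ?_⟩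
      simp only [BExpr.eval, Bool.and_eq_true, decide_eq_true_eq]
      simp only [CExpr.eval]
      refine ⟨by simpa using hja, ?_⟩
      have := (two_le_count w _ hne _ hB j).2 hsub
      exact_mod_cast this

def patExpr {α : Type} (pat : List α) : BExpr α :=
  match pat.reverse with
  | [] => .top
  | a :: rest => subseqExpr a rest

lemma hpat_eq {α : Type} {pat : List α} {a : α} {rest : List α}
    (h : pat.reverse = a :: rest) : pat = rest.reverse ++ [a] := by
  have := congrArg List.reverse h; simpa using this

lemma patExpr_accepts {α : Type} [DecidableEq α] (pat w : List α) :
    BExpr.eval w (patExpr pat) (w.length - 1) = true ↔ pat.Sublist w := by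
  have htake : w.take (w.length - 1 + 1) = w := by
    apply List.take_of_length_le; omega
  rcases h : pat.reverse with _ | ⟨a, rest⟩
  · have hnil : pat = [] := by simpa using congrArg List.reverse h
    subst hnil
    simp [patExpr, BExpr.eval, List.nil_sublist]
  · have hP : patExpr pat = subseqExpr a rest := by unfold patExpr; rw [h]
    rw [hP, subseq_eval, htake, ← hpat_eq h]


/-- Every piecewise testable language is C-RASP recognizable; in particular,
each subsequence language `Σ*a₁Σ*…Σ*aₙΣ*` is recognizable, and the class of
C-RASP-recognizable languages is closed under Boolean operations. -/
theorem stmt14 {α : Type} [DecidableEq α] :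
    (∀ L : List α → Prop, PiecewiseTestable L →
      ∃ P : BExpr α, ∀ w : List α, P.accepts w ↔ L w) ∧
    (∀ pat : List α, ∃ P : BExpr α, ∀ w : List α, P.accepts w ↔ pat.Sublist w) ∧
    (∀ P₁ P₂ : BExpr α,
      (∃ P : BExpr α, ∀ w : List α, P.accepts w ↔ ¬ P₁.accepts w) ∧
      (∃ P : BExpr α, ∀ w : List α, P.accepts w ↔ (P₁.accepts w ∧ P₂.accepts w))) := by
  have hpat : ∀ pat : List α, ∃ P : BExpr α, ∀ w, P.accepts w ↔ pat.Sublist w :=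
    fun pat => ⟨patExpr pat, fun w => patExpr_accepts pat w⟩
  have hnot : ∀ P₁ : BExpr α, ∃ P : BExpr α, ∀ w, P.accepts w ↔ ¬ P₁.accepts w :=
    fun P₁ => ⟨.not P₁, fun w => by simp [BExpr.accepts, BExpr.eval]⟩
  have hand : ∀ P₁ P₂ : BExpr α, ∃ P : BExpr α,
      ∀ w, P.accepts w ↔ (P₁.accepts w ∧ P₂.accepts w) :=
    fun P₁ P₂ => ⟨.and P₁ P₂, fun w => by simp [BExpr.accepts, BExpr.eval]⟩
  refine ⟨?_, hpat, fun P₁ P₂ => ⟨hnot P₁, hand P₁ P₂⟩⟩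
  intro L hL
  induction hL with
  | basic pat => exact hpat pat
  | compl _ ih =>
    obtain ⟨P, hP⟩ := ih
    obtain ⟨P', hP'⟩ := hnot P
    exact ⟨P', fun w => (hP' w).trans (not_congr (hP w))⟩
  | inter _ _ ih₁ ih₂ =>
    obtain ⟨P₁, hP₁⟩ := ih₁
    obtain ⟨P₂, hP₂⟩ := ih₂
    obtain ⟨P, hP⟩ := hand P₁ P₂
    exact ⟨P, fun w => (hP w).trans (and_congr (hP₁ w) (hP₂ w))⟩
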